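/- Let G be a finite group and let k be a field whose multiplicative group k* has order at least 2|G|. Then there exists a function f : G → k such that the Cayley evolution algebra Cay(f) is simple and Aut(Cay(f)) is isomorphic to G. -/

import Mathlib

open scoped BigOperators

variable {k : Type*} [Field k] {G : Type*} [Group G] [Fintype G] [DecidableEq G]

/-- The Cayley evolution product on the group algebra `k[G]` (realized as `G → k`):
it is the `k`-bilinear product with `δ_g · δ_g = ∑ h, f (g⁻¹ * h) • δ_h` and
`δ_g · δ_{g'} = 0` for `g ≠ g'`. -/
def cayMul (f : G → k) (x y : G → k) : G → k :=
  fun h => ∑ g : G, x g * y g * f (g⁻¹ * h)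

/-- The automorphism group of the Cayley evolution algebra `Cay(f)`: the `k`-linear
bijections of `k[G]` preserving the Cayley evolution product. -/
def cayAut (f : G → k) : Subgroup ((G → k) ≃ₗ[k] (G → k)) where
  carrier := {φ | ∀ x y, φ (cayMul f x y) = cayMul f (φ x) (φ y)}
  one_mem' := fun _ _ => rfl
  mul_mem' := by
    intro a b ha hb x y
    replace ha : ∀ x y, a (cayMul f x y) = cayMul f (a x) (a y) := ha
    replace hb : ∀ x y, b (cayMul f x y) = cayMul f (b x) (b y) := hb
    show a (b (cayMul f x y)) = cayMul f (a (b x)) (a (b y))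
    rw [hb, ha]
  inv_mem' := by
    intro a ha x y
    replace ha : ∀ x y, a (cayMul f x y) = cayMul f (a x) (a y) := ha
    show a.symm (cayMul f x y) = cayMul f (a.symm x) (a.symm y)
    apply a.injective
    rw [ha, a.apply_symm_apply, a.apply_symm_apply, a.apply_symm_apply]

/-- `Cay(f)` is simple: the product is not identically zero and the only ideals
(`k`-subspaces `I` with `k[G] · I ⊆ I`) are `0` and `k[G]`. -/
def CaySimple (f : G → k) : Prop :=
  (∃ x y : G → k, cayMul f x y ≠ 0) ∧
  ∀ I : Submodule k (G → k), (∀ x y : G → k, y ∈ I → cayMul f x y ∈ I) → I = ⊥ ∨ I = ⊤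

/-- The structure matrix of `Cay(f)`: its `(h, g)` entry is `f (g⁻¹ * h)`. -/
def structMatrix (f : G → k) : Matrix G G k := Matrix.of fun h g => f (g⁻¹ * h)

set_option linter.unusedSectionVars false

lemma cayMul_eq_mulVec (f : G → k) (x y : G → k) :
    cayMul f x y = (structMatrix f).mulVec (x * y) := by
  funext h
  rw [cayMul, Matrix.mulVec, dotProduct]
  exact Finset.sum_congr rfl fun g _ => by simp [structMatrix]; ring

lemma delta_sq (f : G → k) (g : G) :
    cayMul f (Pi.single g 1) (Pi.single g 1) = fun h => f (g⁻¹ * h) := by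
  funext h
  rw [cayMul, Finset.sum_eq_single g]
  · simp
  · intro b _ hb; rw [Pi.single_eq_of_ne hb]; ring
  · simp

lemma delta_mul_ne (f : G → k) {g g' : G} (hgg' : g ≠ g') :
    cayMul f (Pi.single g 1) (Pi.single g' 1) = 0 := by
  funext h
  rw [cayMul]
  apply Finset.sum_eq_zero
  intro b _
  by_cases hb : b = g
  · subst hb; rw [Pi.single_eq_of_ne hgg']; ring
  · rw [Pi.single_eq_of_ne hb]; ring

def Lmap (a : G) : (G → k) ≃ₗ[k] (G → k) where
  toFun x := fun h => x (a⁻¹ * h)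
  invFun x := fun h => x (a * h)
  map_add' x y := rfl
  map_smul' c x := rfl
  left_inv x := by funext h; simp [mul_inv_cancel_left]
  right_inv x := by funext h; simp [inv_mul_cancel_left]

lemma Lmap_apply (a : G) (x : G → k) (h : G) : Lmap a x h = x (a⁻¹ * h) := rfl

lemma Lmap_cayMul (f : G → k) (a : G) (x y : G → k) :
    Lmap a (cayMul f x y) = cayMul f (Lmap a x) (Lmap a y) := by
  funext h
  show cayMul f x y (a⁻¹ * h) = ∑ g : G, x (a⁻¹ * g) * y (a⁻¹ * g) * f (g⁻¹ * h)
  rw [cayMul]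
  exact Fintype.sum_equiv (Equiv.mulLeft a) _ _ (fun g => by
    simp [mul_inv_rev, mul_assoc])

lemma Lmap_mul (a b : G) : (Lmap (a * b) : (G → k) ≃ₗ[k] (G → k)) = Lmap a * Lmap b := by
  ext x h
  show x ((a*b)⁻¹ * h) = Lmap a (Lmap b x) h
  simp [Lmap_apply, mul_inv_rev, mul_assoc]

lemma Lmap_one : (Lmap (1 : G) : (G → k) ≃ₗ[k] (G → k)) = 1 := by
  ext x h
  show x (1⁻¹ * h) = x h
  simp

lemma rigidity (f : G → k) (hinj : Function.Injective f) (hne : ∀ t, f t ≠ 0)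
    (hdet : IsUnit (structMatrix f).det) (φ : (G → k) ≃ₗ[k] (G → k))
    (hφ : ∀ x y, φ (cayMul f x y) = cayMul f (φ x) (φ y)) :
    ∃ a : G, φ = Lmap a := by
  classical
  have hMinj : Function.Injective (structMatrix f).mulVec :=
    (Matrix.mulVec_injective_iff_isUnit).2 ((Matrix.isUnit_iff_isUnit_det _).2 hdet)
  set u : G → (G → k) := fun g => φ (Pi.single g 1) with hu
  have hdisj : ∀ g g', g ≠ g' → ∀ h, u g h * u g' h = 0 := by
    intro g g' hgg' h
    have h0 : cayMul f (u g) (u g') = 0 := by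
      rw [← hφ, delta_mul_ne f hgg', map_zero]
    rw [cayMul_eq_mulVec] at h0
    have : u g * u g' = 0 := hMinj (by rw [h0]; simp [Matrix.mulVec_zero])
    exact congrFun this h
  have hune : ∀ g, u g ≠ 0 := by
    intro g hg
    have h1 : (Pi.single g 1 : G → k) = 0 := by
      apply φ.injective
      rw [map_zero]
      exact hg
    have := congrFun h1 g
    simp at this
  set s : G → Finset G := fun g => Finset.univ.filter (fun h => u g h ≠ 0) with hs
  have hmem : ∀ g h, h ∈ s g ↔ u g h ≠ 0 := by
    intro g h; simp [hs]
  have hcard1 : ∀ g, 1 ≤ (s g).card := by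
    intro g
    obtain ⟨h, hh⟩ := Function.ne_iff.mp (hune g)
    exact Finset.card_pos.mpr ⟨h, (hmem g h).mpr (by simpa using hh)⟩
  have hdisjs : ∀ g ∈ Finset.univ, ∀ g' ∈ Finset.univ, g ≠ g' → Disjoint (s g) (s g') := by
    intro g _ g' _ hgg'
    rw [Finset.disjoint_left]
    intro h hg hg'
    exact ((hmem g h).mp hg) (by
      rcases mul_eq_zero.mp (hdisj g g' hgg' h) with h1 | h1
      · exact h1
      · exact absurd h1 ((hmem g' h).mp hg'))
  have hsum : ∑ g : G, (s g).card ≤ Fintype.card G := by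
    rw [← Finset.card_biUnion hdisjs]
    exact Finset.card_le_univ _
  have hcards : ∀ g : G, (s g).card = 1 := by
    have h1 : ∑ _g : G, 1 ≤ ∑ g : G, (s g).card := Finset.sum_le_sum fun g _ => hcard1 g
    have h2 : ∑ g : G, (s g).card = ∑ _g : G, 1 := le_antisymm (by simpa using hsum) h1
    intro g
    have := (Finset.sum_eq_sum_iff_of_le (fun i _ => hcard1 i)).mp h2.symm g (Finset.mem_univ g)
    omega
  have hsig : ∀ g : G, ∃ a : G, s g = {a} := fun g => Finset.card_eq_one.mp (hcards g)
  choose σ hσ using hsig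
  have huσ : ∀ g, u g (σ g) ≠ 0 := by
    intro g
    exact (hmem g (σ g)).mp (by rw [hσ g]; exact Finset.mem_singleton_self _)
  have huz : ∀ g h, h ≠ σ g → u g h = 0 := by
    intro g h hh
    by_contra hz
    have := (hmem g h).mpr hz
    rw [hσ g, Finset.mem_singleton] at this
    exact hh this
  have hσinj : Function.Injective σ := by
    intro g g' hgg'
    by_contra hne'
    have := hdisj g g' hne' (σ g)
    rcases mul_eq_zero.mp this with h1 | h1
    · exact huσ g h1
    · rw [hgg'] at h1; exact huσ g' h1
  set lam : G → k := fun g => u g (σ g) with hlam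
  have husingle : ∀ g, u g = lam g • (Pi.single (σ g) 1 : G → k) := by
    intro g
    funext h
    by_cases hh : h = σ g
    · subst hh; simp [hlam]
    · rw [huz g h hh]; simp [Pi.single_eq_of_ne hh]
  have hE : ∀ g h : G, f (g⁻¹ * h) * lam h = lam g ^ 2 * f ((σ g)⁻¹ * σ h) := by
    intro g h
    have key := hφ (Pi.single g 1) (Pi.single g 1)
    rw [delta_sq] at key
    have hexp : (fun h' => f (g⁻¹ * h')) = ∑ h' : G, f (g⁻¹ * h') • (Pi.single h' (1:k) : G → k) := by
      funext h''
      rw [Finset.sum_apply, Finset.sum_eq_single h'']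
      · simp
      · intro b _ hb; rw [Pi.smul_apply, Pi.single_eq_of_ne (Ne.symm hb)]; simp
      · simp
    rw [hexp, map_sum] at key
    have hL : (∑ h' : G, φ (f (g⁻¹ * h') • (Pi.single h' (1:k) : G → k))) (σ h)
        = f (g⁻¹ * h) * lam h := by
      rw [Finset.sum_apply, Finset.sum_eq_single h]
      · rw [map_smul, Pi.smul_apply]
        show f (g⁻¹ * h) • (u h) (σ h) = _
        rw [hlam]; rfl
      · intro b _ hb
        rw [map_smul, Pi.smul_apply]
        show f (g⁻¹ * b) • (u b) (σ h) = 0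
        rw [huz b (σ h) (fun hc => hb (hσinj hc).symm)]
        simp
      · simp
    have hR : cayMul f (φ (Pi.single g 1)) (φ (Pi.single g 1)) (σ h)
        = lam g ^ 2 * f ((σ g)⁻¹ * σ h) := by
      show cayMul f (u g) (u g) (σ h) = _
      rw [cayMul, Finset.sum_eq_single (σ g)]
      · rw [hlam]; ring
      · intro b _ hb; rw [huz g b hb]; ring
      · simp
    rw [← hL, ← hR, key]
  have hlam1 : ∀ g, lam g = 1 := by
    intro g
    have := hE g g
    simp only [inv_mul_cancel] at this
    have hln : lam g ≠ 0 := huσ g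
    have : f 1 * lam g = lam g * lam g * f 1 := by rw [this]; ring
    have h2 : lam g * f 1 = lam g * (lam g * f 1) := by
      calc lam g * f 1 = f 1 * lam g := mul_comm _ _
        _ = lam g * lam g * f 1 := this
        _ = lam g * (lam g * f 1) := by ring
    have := mul_left_cancel₀ hln h2.symm
    -- this : lam g * f 1 = f 1
    have h3 : lam g * f 1 = 1 * f 1 := by rw [this, one_mul]
    exact mul_right_cancel₀ (hne 1) h3
  have hσeq : ∀ h, σ h = σ 1 * h := by
    intro h
    have h1 := hE 1 h
    rw [hlam1, hlam1] at h1
    have h2 : f (1⁻¹ * h) = f ((σ 1)⁻¹ * σ h) := by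
      rw [mul_one] at h1
      rw [h1]; ring
    have h3 : h = (σ 1)⁻¹ * σ h := by
      have := hinj h2
      rwa [inv_one, one_mul] at this
    nth_rewrite 2 [h3]
    rw [mul_inv_cancel_left]
  refine ⟨σ 1, ?_⟩
  have hub : ∀ b, u b = (Pi.single (σ 1 * b) 1 : G → k) := by
    intro b
    rw [husingle, hlam1, one_smul, hσeq]
  ext x h
  show φ x h = x ((σ 1)⁻¹ * h)
  have hx : x = ∑ g : G, x g • (Pi.single g 1 : G → k) := by
    funext h'
    rw [Finset.sum_apply, Finset.sum_eq_single h']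
    · simp
    · intro b _ hb; rw [Pi.smul_apply, Pi.single_eq_of_ne (Ne.symm hb)]; simp
    · simp
  conv_lhs => rw [hx]
  rw [map_sum, Finset.sum_apply, Finset.sum_eq_single ((σ 1)⁻¹ * h)]
  · rw [map_smul, Pi.smul_apply]
    show x ((σ 1)⁻¹ * h) • u ((σ 1)⁻¹ * h) h = _
    rw [hub, mul_inv_cancel_left]
    simp
  · intro b _ hb
    rw [map_smul, Pi.smul_apply]
    show x b • u b h = 0
    rw [huz b h (fun hc => hb ?_)]
    · simp
    · rw [hσeq b] at hc
      rw [hc, inv_mul_cancel_left]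
  · simp

lemma simple_of (f : G → k) (hne : ∀ t, f t ≠ 0) (hdet : IsUnit (structMatrix f).det) :
    (∃ x y : G → k, cayMul f x y ≠ 0) ∧
    ∀ I : Submodule k (G → k), (∀ x y : G → k, y ∈ I → cayMul f x y ∈ I) → I = ⊥ ∨ I = ⊤ := by
  classical
  constructor
  · refine ⟨Pi.single 1 1, Pi.single 1 1, ?_⟩
    rw [delta_sq]
    intro h0
    have := congrFun h0 1
    simp at this
    exact hne 1 this
  · intro I hI
    by_cases hbot : I = ⊥
    · exact Or.inl hbot
    right
    obtain ⟨y, hyI, hy0⟩ := (Submodule.ne_bot_iff I).mp hbot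
    obtain ⟨g, hg⟩ := Function.ne_iff.mp hy0
    replace hg : y g ≠ 0 := by simpa using hg
    set col : G → (G → k) := fun g0 => fun h => f (g0⁻¹ * h) with hcol
    have hcolg : col g ∈ I := by
      have hmem := hI ((y g)⁻¹ • (Pi.single g (1:k) : G → k)) y hyI
      have heq : cayMul f ((y g)⁻¹ • (Pi.single g (1:k) : G → k)) y = col g := by
        funext h
        rw [cayMul, Finset.sum_eq_single g]
        · rw [Pi.smul_apply, Pi.single_eq_same, hcol]
          show (y g)⁻¹ • (1:k) * y g * f (g⁻¹ * h) = f (g⁻¹ * h)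
          rw [smul_eq_mul, mul_one, inv_mul_cancel₀ hg, one_mul]
        · intro b _ hb
          rw [Pi.smul_apply, Pi.single_eq_of_ne hb]
          ring_nf
        · simp
      rwa [heq] at hmem
    have hcolall : ∀ h0 : G, col h0 ∈ I := by
      intro h0
      have hmem := hI ((f (g⁻¹ * h0))⁻¹ • (Pi.single h0 (1:k) : G → k)) (col g) hcolg
      have heq : cayMul f ((f (g⁻¹ * h0))⁻¹ • (Pi.single h0 (1:k) : G → k)) (col g) = col h0 := by
        funext h
        rw [cayMul, Finset.sum_eq_single h0]
        · rw [Pi.smul_apply, Pi.single_eq_same, hcol]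
          show (f (g⁻¹ * h0))⁻¹ • (1:k) * f (g⁻¹ * h0) * f (h0⁻¹ * h) = f (h0⁻¹ * h)
          rw [smul_eq_mul, mul_one, inv_mul_cancel₀ (hne _), one_mul]
        · intro b _ hb
          rw [Pi.smul_apply, Pi.single_eq_of_ne hb]
          ring_nf
        · simp
      rwa [heq] at hmem
    rw [eq_top_iff]
    intro v _
    obtain ⟨w, hw⟩ := (Matrix.mulVec_surjective_iff_isUnit.mpr
      ((Matrix.isUnit_iff_isUnit_det _).2 hdet)) v
    have hv : v = ∑ g' : G, w g' • col g' := by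
      rw [← hw]
      funext h
      rw [Finset.sum_apply, Matrix.mulVec, dotProduct]
      exact Finset.sum_congr rfl fun g' _ => by
        simp [structMatrix, hcol, mul_comm]
    rw [hv]
    exact Submodule.sum_mem _ fun g' _ => Submodule.smul_mem _ _ (hcolall g')

lemma exists_good' {G : Type*} [Group G] [Fintype G] [DecidableEq G] {k : Type*} [Field k]
    (hk : 2 * (Fintype.card G : Cardinal) ≤ Cardinal.mk kˣ) :
    ∃ f : G → k, Function.Injective f ∧ (∀ t, f t ≠ 0) ∧ IsUnit (structMatrix f).det := by
  classical
  set n := Fintype.card G with hn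
  have hn1 : 1 ≤ n := Fintype.card_pos
  have hnk : ((n : ℕ) : Cardinal) ≤ Cardinal.mk kˣ := by
    refine le_trans ?_ hk
    calc ((n : ℕ) : Cardinal) = 1 * n := (one_mul _).symm
      _ ≤ 2 * n := mul_le_mul_left one_le_two _
  have hGle : Nonempty (G ↪ kˣ) := by
    apply Cardinal.lift_mk_le'.mp
    rw [Cardinal.mk_fintype, Cardinal.lift_natCast]
    have h2 := Cardinal.lift_le.mpr hnk
    rwa [Cardinal.lift_natCast] at h2
  obtain ⟨e⟩ := hGle
  set N : Matrix G G k := structMatrix (fun t => if t = 1 then 0 else (e t : k)) with hN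
  set p : Polynomial k := (-N).charpoly with hp
  have hpm : p.Monic := Matrix.charpoly_monic _
  have hp0 : p ≠ 0 := hpm.ne_zero
  have hpdeg : p.natDegree = n := by rw [hp, Matrix.charpoly_natDegree_eq_dim]
  set bad : Finset k :=
    p.roots.toFinset ∪ (Finset.univ.erase (1 : G)).image (fun t => ((e t : kˣ) : k)) with hbad
  have hbadcard : bad.card ≤ n + (n - 1) := by
    refine le_trans (Finset.card_union_le _ _) ?_
    gcongr
    · exact le_trans (Multiset.toFinset_card_le _) (le_trans (p.card_roots') (le_of_eq hpdeg))
    · refine le_trans (Finset.card_image_le) ?_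
      rw [Finset.card_erase_of_mem (Finset.mem_univ _), Finset.card_univ]
  have hx : ∃ x : kˣ, ((x : k) ∉ bad) := by
    by_contra hcon
    push_neg at hcon
    have hinj2 : Function.Injective (fun x : kˣ => (⟨(x : k), hcon x⟩ : {a // a ∈ bad})) := by
      intro a b hab
      exact Units.ext (congrArg Subtype.val hab)
    have hle : Cardinal.mk kˣ ≤ bad.card := by
      have := Cardinal.mk_le_of_injective hinj2
      rwa [Cardinal.mk_coe_finset] at this
    have hlt : (bad.card : Cardinal) < 2 * (n : Cardinal) := by
      have : ((bad.card : ℕ) : Cardinal) ≤ ((n + (n-1) : ℕ) : Cardinal) := by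
        exact_mod_cast Nat.cast_le.mpr hbadcard
      refine lt_of_le_of_lt this ?_
      have h3 : n + (n - 1) < 2 * n := by omega
      calc ((n + (n-1) : ℕ) : Cardinal) < ((2 * n : ℕ) : Cardinal) := Nat.cast_lt.mpr h3
        _ = 2 * (n : Cardinal) := by push_cast; ring
    exact absurd (le_trans hk hle) (not_le.mpr hlt)
  obtain ⟨x, hx⟩ := hx
  refine ⟨fun t => if t = 1 then (x : k) else (e t : k), ?_, ?_, ?_⟩
  · intro t t' htt'
    dsimp only at htt'
    by_cases ht : t = 1 <;> by_cases ht' : t' = 1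
    · rw [ht, ht']
    · rw [if_pos ht, if_neg ht'] at htt'
      exact absurd (hbad ▸ Finset.mem_union_right _ (Finset.mem_image.mpr
        ⟨t', Finset.mem_erase.mpr ⟨ht', Finset.mem_univ _⟩, htt'.symm⟩)) hx
    · rw [if_neg ht, if_pos ht'] at htt'
      exact absurd (hbad ▸ Finset.mem_union_right _ (Finset.mem_image.mpr
        ⟨t, Finset.mem_erase.mpr ⟨ht, Finset.mem_univ _⟩, htt'⟩)) hx
    · rw [if_neg ht, if_neg ht'] at htt'
      exact e.injective (Units.ext htt')
  · intro t
    dsimp only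
    by_cases ht : t = 1
    · rw [if_pos ht]; exact x.ne_zero
    · rw [if_neg ht]; exact (e t).ne_zero
  · have hmat : structMatrix (fun t => if t = 1 then (x : k) else (e t : k))
        = (Matrix.charmatrix (-N)).map (Polynomial.evalRingHom (x : k)) := by
      ext h g
      rw [Matrix.map_apply, Matrix.charmatrix_apply]
      by_cases hgh : h = g
      · subst hgh
        simp [structMatrix, hN, Matrix.diagonal_apply_eq]
      · have h1 : g⁻¹ * h ≠ 1 := fun hc => hgh (inv_mul_eq_one.mp hc).symm
        rw [Matrix.diagonal_apply_ne _ hgh]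
        simp [structMatrix, hN, if_neg h1]
    have hdet : (structMatrix (fun t => if t = 1 then (x : k) else (e t : k))).det
        = p.eval (x : k) := by
      rw [hmat, hp, Matrix.charpoly]
      show ((Matrix.charmatrix (-N)).map (Polynomial.evalRingHom (x:k))).det
        = (Polynomial.evalRingHom (x:k)) (Matrix.charmatrix (-N)).det
      rw [RingHom.map_det, RingHom.mapMatrix_apply]
    rw [hdet, isUnit_iff_ne_zero]
    intro hzero
    have : (x : k) ∈ p.roots.toFinset := by
      rw [Multiset.mem_toFinset, Polynomial.mem_roots hp0]
      exact hzero
    exact hx (hbad ▸ Finset.mem_union_left _ this)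

/-- If `G` is a finite group and `k` a field with `|kˣ| ≥ 2|G|`, then there
is a function `f : G → k` such that the Cayley evolution algebra `Cay(f)` is simple and
`Aut(Cay(f)) ≅ G`. -/
theorem cayley_realization {G : Type*} [Group G] [Fintype G] [DecidableEq G]
    {k : Type*} [Field k]
    (hk : 2 * (Fintype.card G : Cardinal) ≤ Cardinal.mk kˣ) :
    ∃ f : G → k, CaySimple f ∧ Nonempty (↥(cayAut f) ≃* G) := by
  classical
  obtain ⟨f, hinj, hne, hdet⟩ := exists_good' hk
  refine ⟨f, simple_of f hne hdet, ?_⟩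
  let Φ : G →* (cayAut f) :=
    { toFun := fun a => ⟨Lmap a, fun x y => Lmap_cayMul f a x y⟩
      map_one' := Subtype.ext Lmap_one
      map_mul' := fun a b => Subtype.ext (Lmap_mul a b) }
  have hbij : Function.Bijective Φ := by
    constructor
    · intro a b hab
      have h1 : (Lmap a : (G → k) ≃ₗ[k] (G → k)) = Lmap b := congrArg Subtype.val hab
      have h2 : Lmap a (Pi.single (1:G) (1:k) : G → k) = Lmap b (Pi.single (1:G) (1:k)) := by
        rw [h1]
      have h3 := congrFun h2 a
      rw [Lmap_apply, Lmap_apply, inv_mul_cancel, Pi.single_eq_same] at h3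
      by_cases hc : b⁻¹ * a = 1
      · exact (inv_mul_eq_one.mp hc).symm
      · rw [Pi.single_eq_of_ne hc] at h3
        exact absurd h3 one_ne_zero
    · rintro ⟨φ, hφ⟩
      obtain ⟨a, ha⟩ := rigidity f hinj hne hdet φ hφ
      exact ⟨a, Subtype.ext ha.symm⟩
  exact ⟨(MulEquiv.ofBijective Φ hbij).symm⟩
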